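/- Let p be a rank-one projection in M_n(ℂ), B = pM_n(ℂ)p ⊕ (1−p)M_n(ℂ)(1−p), and E(x) = pxp + (1−p)x(1−p) the conditional expectation from M_n(ℂ) onto B. If {(u_i, u_i*)}_{i=1}^m is a quasi-basis for E, then necessarily m ≥ n. -/

import Mathlib

/-- Let `p = e₁₁` be a rank-one projection in `Mₙ(ℂ)` and
`E x = p x p + (1-p) x (1-p)` the conditional expectation onto
`p Mₙ(ℂ) p ⊕ (1-p) Mₙ(ℂ) (1-p)`.  If `{(u i, (u i)⋆)}` (with `m` elements)
is a quasi-basis for `E`, then necessarily `m ≥ n`. -/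
theorem stmt_7 (n m : ℕ) [NeZero n]
    (p : Matrix (Fin n) (Fin n) ℂ) (hp : p = Matrix.single 0 0 1)
    (E : Matrix (Fin n) (Fin n) ℂ → Matrix (Fin n) (Fin n) ℂ)
    (hE : ∀ x, E x = p * x * p + (1 - p) * x * (1 - p))
    (u : Fin m → Matrix (Fin n) (Fin n) ℂ)
    (hqb : ∀ x, x = ∑ i, u i * E (star (u i) * x)) :
    n ≤ m := by
  subst hp
  -- Key identity: the columns `v i = (u i) · 0` satisfy `∑ i v i (v i)ᴴ = 1`.
  have key : ∀ k l : Fin n,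
      ∑ i, (u i) l 0 * (starRingEnd ℂ) ((u i) k 0) = if l = k then 1 else 0 := by
    intro k l
    have h := hqb (Matrix.single k 0 1)
    have h2 := congrFun (congrFun h l) (0 : Fin n)
    rw [Matrix.sum_apply] at h2
    simp [hE, Matrix.mul_apply, Matrix.single, Matrix.one_apply,
      Matrix.star_apply, RCLike.star_def, mul_ite, ite_mul, mul_sub, sub_mul,
      Finset.sum_sub_distrib, and_true, eq_comm, ite_and] at h2
    simpa [eq_comm] using h2.symm
  -- The matrix of these columns
  set A : Matrix (Fin n) (Fin m) ℂ := Matrix.of (fun k i => (u i) k 0) with hA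
  have hAA : A * A.conjTranspose = 1 := by
    ext l k
    simpa [hA, Matrix.mul_apply, Matrix.conjTranspose_apply, Matrix.one_apply,
      RCLike.star_def] using key k l
  -- Rank argument
  have h1 : ((1 : Matrix (Fin n) (Fin n) ℂ)).rank = n := by
    simp [Matrix.rank_one]
  calc n = ((1 : Matrix (Fin n) (Fin n) ℂ)).rank := h1.symm
    _ = (A * A.conjTranspose).rank := by rw [hAA]
    _ ≤ A.rank := Matrix.rank_mul_le_left A A.conjTranspose
    _ ≤ Fintype.card (Fin m) := A.rank_le_card_width
    _ = m := Fintype.card_fin m
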